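/- With notation as above, the subgroup 𝒩 := ⟨{ψ_β : β ⊆ 𝒯_G}⟩ of Aut(F_k(G)) is isomorphic to Z_2^{|𝒯_G|}. -/

import Mathlib

open scoped Classical symmDiff

variable {V : Type*}

/-- The `k`-token graph of `G`: vertices are the `k`-subsets of `V(G)`,
two being adjacent iff their symmetric difference is an edge of `G`. -/
def tokenGraph [DecidableEq V] (G : SimpleGraph V) (k : ℕ) :
    SimpleGraph {A : Finset V // A.card = k} where
  Adj A B := ∃ a b : V, G.Adj a b ∧ (A.1 ∆ B.1) = {a, b}
  symm := by
    constructor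
    rintro A B ⟨a, b, hab, h⟩
    exact ⟨a, b, hab, by rwa [symmDiff_comm]⟩
  loopless := by
    constructor
    rintro A ⟨a, b, hab, h⟩
    rw [symmDiff_self] at h
    exact (Finset.insert_ne_empty a {b}) h.symm

/-- `S` is a 2-cut with the same neighbours: a 2-element vertex set whose removal
disconnects `G` and whose two vertices have the same neighbours outside `S`. -/
def SameNbrCut (G : SimpleGraph V) (S : Finset V) : Prop :=
  S.card = 2 ∧ ¬ (G.induce ((↑S : Set V)ᶜ)).Preconnected ∧
    ∀ x ∈ S, ∀ y ∈ S, ∀ v ∉ S, (G.Adj x v ↔ G.Adj y v)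

/-- `A^S = (A \ S) ∪ (S \ A)`. -/
def tokenMove [DecidableEq V] (A S : Finset V) : Finset V := (A \ S) ∪ (S \ A)

/-- The connected components of `G \ S`. -/
abbrev delComp (G : SimpleGraph V) (S : Finset V) :=
  (G.induce ((↑S : Set V)ᶜ)).ConnectedComponent

/-- The distribution tuple of `A` over the components of `G \ S`. -/
noncomputable def compDist (G : SimpleGraph V) (S : Finset V) (A : Finset V)
    (c : delComp G S) : ℕ :=
  {v : ((↑S : Set V)ᶜ : Set V) | (v : V) ∈ A ∧
    (G.induce ((↑S : Set V)ᶜ)).connectedComponentMk v = c}.ncard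

/-- `T_S`: distribution tuples with `kᵢ ≤ nᵢ` summing to `k - 1`. -/
def TS (G : SimpleGraph V) (S : Finset V) (k : ℕ) : Set (delComp G S → ℕ) :=
  {t | (∀ c, t c ≤ c.supp.ncard) ∧ ∑ᶠ c, t c = k - 1}

/-- The map `φ_{S,α}` on `k`-subsets. -/
noncomputable def phiFun [DecidableEq V] (G : SimpleGraph V) (S : Finset V)
    (α : Set (delComp G S → ℕ)) (A : Finset V) : Finset V :=
  if compDist G S A ∈ α then tokenMove A S else A

/-- The map `ψ_β`, the composition of the `φ_{Sᵢ,βᵢ}`. -/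
noncomputable def psiFun [DecidableEq V] (G : SimpleGraph V) {q : ℕ}
    (S : Fin q → Finset V) (β : ∀ i, Set (delComp G (S i) → ℕ)) :
    Finset V → Finset V :=
  (List.ofFn (fun i => phiFun G (S i) (β i))).foldr (· ∘ ·) id

section Aux
set_option linter.unusedSectionVars false
variable [Fintype V] [DecidableEq V]

lemma tokenMove_eq (A S : Finset V) : tokenMove A S = A ∆ S := rfl

lemma not_mem_of_compl {S : Finset V} (v : ((↑S : Set V)ᶜ : Set V)) : (v : V) ∉ S :=
  fun h => v.2 (Finset.mem_coe.mpr h)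

lemma compDist_symmDiff (G : SimpleGraph V) (S A : Finset V) :
    compDist G S (A ∆ S) = compDist G S A := by
  funext c
  unfold compDist
  congr 1
  ext v
  have hv : (v : V) ∉ S := not_mem_of_compl v
  simp [Finset.mem_symmDiff, hv]

/-- `compDist` as a Finset card. -/
lemma compDist_eq_card (G : SimpleGraph V) (S A : Finset V) (c : delComp G S) :
    compDist G S A c = (Finset.univ.filter (fun v : ((↑S : Set V)ᶜ : Set V) =>
      (v : V) ∈ A ∧ (G.induce ((↑S : Set V)ᶜ)).connectedComponentMk v = c)).card := by
  rw [compDist, ← Set.ncard_coe_finset]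
  congr 1
  ext v
  simp

lemma sum_compDist (G : SimpleGraph V) (S A : Finset V) :
    ∑ᶠ c, compDist G S A c = (A \ S).card := by
  classical
  rw [finsum_eq_sum_of_fintype]
  have h1 : (A \ S).card = (Finset.univ.filter
      (fun v : ((↑S : Set V)ᶜ : Set V) => (v : V) ∈ A)).card := by
    refine (Finset.card_bij (s := Finset.univ.filter
        (fun v : ((↑S : Set V)ᶜ : Set V) => (v : V) ∈ A)) (t := A \ S)
        (fun v _ => (v : V)) ?_ ?_ ?_).symm
    · intro v hv
      simp only [Finset.mem_filter, Finset.mem_univ, true_and] at hv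
      have : (v : V) ∉ S := not_mem_of_compl v
      simp [Finset.mem_sdiff, hv, this]
    · intro a _ b _ h
      exact Subtype.ext h
    · intro a ha
      simp only [Finset.mem_sdiff] at ha
      exact ⟨⟨a, by simpa using ha.2⟩, by simp [ha.1], rfl⟩
  rw [h1]
  rw [Finset.card_eq_sum_card_fiberwise
    (f := fun v => (G.induce ((↑S : Set V)ᶜ)).connectedComponentMk v)
    (t := Finset.univ) (fun _ _ => Finset.mem_univ _)]
  refine Finset.sum_congr rfl (fun c _ => ?_)
  rw [compDist_eq_card]
  congr 1
  ext v
  simp [Finset.mem_filter, and_comm]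

end Aux
section Cuts
set_option linter.unusedSectionVars false
set_option linter.unnecessarySimpa false
variable [Fintype V] [DecidableEq V] {G : SimpleGraph V}

lemma walk_aux {S : Finset V} :
    ∀ {a c : V} (_ : G.Walk a c), ∀ (ha : a ∉ S), c ∈ S →
      ∃ (b : V) (hb : b ∉ S) (s : V), s ∈ S ∧ G.Adj s b ∧
        (G.induce ((↑S : Set V)ᶜ)).Reachable ⟨a, by simpa using ha⟩ ⟨b, by simpa using hb⟩ := by
  intro a c p
  induction p with
  | nil => intro ha hc; exact absurd hc ha
  | @cons u v w h p ih =>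
    intro ha hc
    by_cases hv : v ∈ S
    · exact ⟨u, ha, v, hv, h.symm, SimpleGraph.Reachable.refl _⟩
    · obtain ⟨b, hb, s, hs, hadj, hr⟩ := ih hv hc
      refine ⟨b, hb, s, hs, hadj, SimpleGraph.Reachable.trans ?_ hr⟩
      have : (G.induce ((↑S : Set V)ᶜ)).Adj ⟨u, by simpa using ha⟩ ⟨v, by simpa using hv⟩ := by
        simpa using h
      exact this.reachable

lemma comp_meets_nbr (hG : G.Connected) {S : Finset V} (hS : SameNbrCut G S) {x : V}
    (hx : x ∈ S) (c : delComp G S) :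
    ∃ b : ((↑S : Set V)ᶜ : Set V),
      (G.induce ((↑S : Set V)ᶜ)).connectedComponentMk b = c ∧ G.Adj x ↑b := by
  obtain ⟨a, ha⟩ := Quot.exists_rep c
  have hreach : G.Reachable ↑a x := hG.preconnected ↑a x
  obtain ⟨p⟩ := hreach
  have haS : (a : V) ∉ S := not_mem_of_compl a
  obtain ⟨b, hb, s, hs, hadj, hr⟩ := walk_aux p haS hx
  refine ⟨⟨b, by simpa using hb⟩, ?_, ?_⟩
  · have h1 : (G.induce ((↑S : Set V)ᶜ)).connectedComponentMk ⟨(a : V), by simpa using haS⟩ =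
        (G.induce ((↑S : Set V)ᶜ)).connectedComponentMk ⟨b, by simpa using hb⟩ :=
      SimpleGraph.ConnectedComponent.sound hr
    rw [← h1, ← ha]
    congr 1
  · exact ((hS.2.2 s hs x hx b hb).mp hadj)

lemma exists_two_comps {S : Finset V} (hS : SameNbrCut G S) :
    ∃ c c' : delComp G S, c ≠ c' := by
  have := hS.2.1
  rw [SimpleGraph.Preconnected] at this
  push_neg at this
  obtain ⟨u, v, h⟩ := this
  exact ⟨(G.induce ((↑S : Set V)ᶜ)).connectedComponentMk u,
    (G.induce ((↑S : Set V)ᶜ)).connectedComponentMk v,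
    fun h' => h (SimpleGraph.ConnectedComponent.exact h')⟩

/-- Two distinct same-neighbour 2-cuts are disjoint. -/
lemma cuts_disjoint (hG : G.Connected) {S T : Finset V} (hS : SameNbrCut G S)
    (hT : SameNbrCut G T) (hne : S ≠ T) : Disjoint S T := by
  rw [Finset.disjoint_left]
  by_contra hcon
  push_neg at hcon
  obtain ⟨v, hvS, hvT⟩ := hcon
  -- get the other vertex v' of T
  obtain ⟨a, b, hab, hTab⟩ := Finset.card_eq_two.mp hT.1
  obtain ⟨v', hv'T, hvv'⟩ : ∃ v', v' ∈ T ∧ v' ≠ v := by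
    rcases (by rw [hTab] at hvT; simpa using hvT : v = a ∨ v = b) with rfl | rfl
    · exact ⟨b, by simp [hTab], hab.symm⟩
    · exact ⟨a, by simp [hTab], hab⟩
  have hpair : ({v, v'} : Finset V).card = 2 := by
    rw [Finset.card_insert_of_notMem (by simpa using Ne.symm hvv')]; simp
  have hsub : ({v, v'} : Finset V) ⊆ T := by
    intro z hz
    simp only [Finset.mem_insert, Finset.mem_singleton] at hz
    rcases hz with rfl | rfl <;> assumption
  have hTeq : T = {v, v'} := (Finset.eq_of_subset_of_card_le hsub (le_of_eq (hT.1.trans hpair.symm))).symm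
  have hv'S : v' ∉ S := by
    intro hv'S
    apply hne
    have hsubS : ({v, v'} : Finset V) ⊆ S := by
      intro z hz
      simp only [Finset.mem_insert, Finset.mem_singleton] at hz
      rcases hz with rfl | rfl <;> assumption
    have : S = {v, v'} := (Finset.eq_of_subset_of_card_le hsubS (le_of_eq (hS.1.trans hpair.symm))).symm
    rw [this, hTeq]
  obtain ⟨c, c', hcc'⟩ := exists_two_comps hS
  obtain ⟨w1, hw1c, hw1adj⟩ := comp_meets_nbr hG hS hvS c
  obtain ⟨w2, hw2c, hw2adj⟩ := comp_meets_nbr hG hS hvS c'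
  have key : ∀ (w : ((↑S : Set V)ᶜ : Set V)), G.Adj v ↑w → (w : V) ≠ v' →
      (G.induce ((↑S : Set V)ᶜ)).connectedComponentMk ⟨v', by simpa using hv'S⟩ =
        (G.induce ((↑S : Set V)ᶜ)).connectedComponentMk w := by
    intro w hadj hne'
    have hwS : (w : V) ∉ S := not_mem_of_compl w
    have hwT : (w : V) ∉ T := by
      rw [hTeq]
      simp only [Finset.mem_insert, Finset.mem_singleton]
      push_neg
      exact ⟨fun h => hwS (h ▸ hvS), hne'⟩
    have hadj' : G.Adj v' ↑w := (hT.2.2 v hvT v' hv'T ↑w hwT).mp hadj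
    have : (G.induce ((↑S : Set V)ᶜ)).Adj ⟨v', by simpa using hv'S⟩ w := by
      simpa using hadj'
    exact SimpleGraph.ConnectedComponent.sound this.reachable
  by_cases h1 : (w1 : V) = v'
  · have e1 : (⟨v', by simpa using hv'S⟩ : ((↑S : Set V)ᶜ : Set V)) = w1 := Subtype.ext h1.symm
    by_cases h2 : (w2 : V) = v'
    · have e2 : (⟨v', by simpa using hv'S⟩ : ((↑S : Set V)ᶜ : Set V)) = w2 := Subtype.ext h2.symm
      exact hcc' (by rw [← hw1c, ← hw2c, ← e1, ← e2])
    · exact hcc' (by rw [← hw1c, ← hw2c, ← e1, key w2 hw2adj h2])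
  · by_cases h2 : (w2 : V) = v'
    · have e2 : (⟨v', by simpa using hv'S⟩ : ((↑S : Set V)ᶜ : Set V)) = w2 := Subtype.ext h2.symm
      exact hcc' (by rw [← hw1c, ← hw2c, ← key w1 hw1adj h1, e2])
    · exact hcc' (by rw [← hw1c, ← hw2c, ← key w1 hw1adj h1, key w2 hw2adj h2])

end Cuts
section C4
set_option linter.unusedSectionVars false
set_option linter.unnecessarySimpa false
variable [Fintype V] [DecidableEq V] {G : SimpleGraph V}

lemma c4_iso {x y u v : V} (hall : ∀ z : V, z = x ∨ z = y ∨ z = u ∨ z = v)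
    (hxy : x ≠ y) (huv : u ≠ v) (hxu : x ≠ u) (hxv : x ≠ v) (hyu : y ≠ u) (hyv : y ≠ v)
    (axu : G.Adj x u) (axv : G.Adj x v) (ayu : G.Adj y u) (ayv : G.Adj y v)
    (nxy : ¬ G.Adj x y) (nuv : ¬ G.Adj u v) : Nonempty (G ≃g SimpleGraph.cycleGraph 4) := by
  classical
  set f : V → Fin 4 := fun z => if z = x then 0 else if z = y then 2 else if z = u then 1 else 3
    with hf
  have fx : f x = 0 := by simp [hf]
  have fy : f y = 2 := by simp [hf, Ne.symm hxy]
  have fu : f u = 1 := by simp [hf, Ne.symm hxu, Ne.symm hyu]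
  have fv : f v = 3 := by simp [hf, Ne.symm hxv, Ne.symm hyv, Ne.symm huv]
  set g : Fin 4 → V := ![x, u, y, v] with hg
  have gf : ∀ z, g (f z) = z := by
    intro z
    rcases hall z with rfl | rfl | rfl | rfl <;> simp [fx, fy, fu, fv, hg]
  have fg : ∀ i, f (g i) = i := by
    intro i
    fin_cases i <;> simp [hg, fx, fy, fu, fv]
  have auy : G.Adj u y := ayu.symm
  have avx : G.Adj v x := axv.symm
  have avy : G.Adj v y := ayv.symm
  have aux' : G.Adj u x := axu.symm
  have nyx : ¬ G.Adj y x := fun h => nxy h.symm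
  have nvu : ¬ G.Adj v u := fun h => nuv h.symm
  have nxx : ¬ G.Adj x x := G.irrefl
  have nyy : ¬ G.Adj y y := G.irrefl
  have nuu : ¬ G.Adj u u := G.irrefl
  have nvv : ¬ G.Adj v v := G.irrefl
  refine ⟨⟨⟨f, g, gf, fg⟩, ?_⟩⟩
  intro a b
  show (SimpleGraph.cycleGraph 4).Adj (f a) (f b) ↔ G.Adj a b
  rcases hall a with rfl | rfl | rfl | rfl <;> rcases hall b with rfl | rfl | rfl | rfl <;>
    simp only [fx, fy, fu, fv] <;>
    first
      | exact iff_of_true (by decide) (by assumption)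
      | exact iff_of_false (by decide) (by assumption)

end C4
section SameComp
set_option linter.unusedSectionVars false
set_option linter.unnecessarySimpa false
variable [Fintype V] [DecidableEq V] {G : SimpleGraph V}

/-- a pair of distinct elements of a 2-set is the whole set -/
lemma pair_eq_of_card_two {S : Finset V} (h2 : S.card = 2) {x y : V}
    (hx : x ∈ S) (hy : y ∈ S) (hxy : x ≠ y) : S = {x, y} := by
  have hpair : ({x, y} : Finset V).card = 2 := by
    rw [Finset.card_insert_of_notMem (by simpa using hxy)]; simp
  have hsub : ({x, y} : Finset V) ⊆ S := by
    intro z hz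
    simp only [Finset.mem_insert, Finset.mem_singleton] at hz
    rcases hz with rfl | rfl <;> assumption
  exact (Finset.eq_of_subset_of_card_le hsub (le_of_eq (h2.trans hpair.symm))).symm

/-- The two vertices of a same-neighbour cut `S` lie in the same component of `G - T`
for any other same-neighbour cut `T`. -/
lemma same_comp_of_other_cut (hG : G.Connected)
    (h4 : IsEmpty (G ≃g SimpleGraph.cycleGraph 4))
    {S T : Finset V} (hS : SameNbrCut G S) (hT : SameNbrCut G T) (hne : S ≠ T)
    {x y : V} (hx : x ∈ S) (hy : y ∈ S) (hxy : x ≠ y)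
    (hxT : x ∉ T) (hyT : y ∉ T) :
    (G.induce ((↑T : Set V)ᶜ)).connectedComponentMk ⟨x, by simpa using hxT⟩ =
      (G.induce ((↑T : Set V)ᶜ)).connectedComponentMk ⟨y, by simpa using hyT⟩ := by
  classical
  have hSeq : S = {x, y} := pair_eq_of_card_two hS.1 hx hy hxy
  by_cases hadjxy : G.Adj x y
  · exact SimpleGraph.ConnectedComponent.sound
      (SimpleGraph.Adj.reachable (by simpa using hadjxy :
        (G.induce ((↑T : Set V)ᶜ)).Adj ⟨x, by simpa using hxT⟩ ⟨y, by simpa using hyT⟩))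
  by_cases hw : ∃ w, w ∉ S ∧ w ∉ T ∧ G.Adj x w
  · obtain ⟨w, hwS, hwT, hadj⟩ := hw
    have hadj' : G.Adj y w := (hS.2.2 x hx y hy w hwS).mp hadj
    have e1 : (G.induce ((↑T : Set V)ᶜ)).Adj ⟨x, by simpa using hxT⟩ ⟨w, by simpa using hwT⟩ := by
      simpa using hadj
    have e2 : (G.induce ((↑T : Set V)ᶜ)).Adj ⟨y, by simpa using hyT⟩ ⟨w, by simpa using hwT⟩ := by
      simpa using hadj'
    exact (SimpleGraph.ConnectedComponent.sound e1.reachable).trans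
      (SimpleGraph.ConnectedComponent.sound e2.reachable).symm
  -- hard case: all neighbours of x (and of y) lie in T; derive G ≅ C₄, contradiction
  exfalso
  push_neg at hw
  have hNx : ∀ z, G.Adj x z → z ∈ T := by
    intro z hz
    by_contra hzT
    have hzS : z ∉ S := by
      rw [hSeq]
      simp only [Finset.mem_insert, Finset.mem_singleton]
      push_neg
      exact ⟨fun h => G.irrefl (h ▸ hz), fun h => hadjxy (h ▸ hz)⟩
    exact hw z hzS hzT hz
  have hNy : ∀ z, G.Adj y z → z ∈ T := by
    intro z hz
    by_contra hzT
    have hzS : z ∉ S := by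
      rw [hSeq]
      simp only [Finset.mem_insert, Finset.mem_singleton]
      push_neg
      exact ⟨fun h => hadjxy (h ▸ hz).symm, fun h => G.irrefl (h ▸ hz)⟩
    exact hw z hzS hzT ((hS.2.2 y hy x hx z hzS).mp hz)
  obtain ⟨c1, c2, hc12⟩ := exists_two_comps hS
  obtain ⟨w1, hw1c, hw1adj⟩ := comp_meets_nbr hG hS hx c1
  obtain ⟨w2, hw2c, hw2adj⟩ := comp_meets_nbr hG hS hx c2
  have hw1T : (w1 : V) ∈ T := hNx _ hw1adj
  have hw2T : (w2 : V) ∈ T := hNx _ hw2adj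
  have hw12 : (w1 : V) ≠ (w2 : V) := by
    intro h
    exact hc12 (by rw [← hw1c, ← hw2c, Subtype.ext h])
  have hTeq : T = {(w1 : V), (w2 : V)} := pair_eq_of_card_two hT.1 hw1T hw2T hw12
  have hw1S : (w1 : V) ∉ S := not_mem_of_compl w1
  have hw2S : (w2 : V) ∉ S := not_mem_of_compl w2
  -- u := w1, v := w2
  have nuv : ¬ G.Adj ↑w1 ↑w2 := by
    intro h
    exact hc12 (by
      rw [← hw1c, ← hw2c]
      exact SimpleGraph.ConnectedComponent.sound
        (SimpleGraph.Adj.reachable (by simpa using h)))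
  -- x and y are isolated in G - T
  have hxiso : ∀ w : ((↑T : Set V)ᶜ : Set V),
      ¬ (G.induce ((↑T : Set V)ᶜ)).Adj ⟨x, by simpa using hxT⟩ w := by
    intro w h
    exact (not_mem_of_compl w) (hNx _ (by simpa using h))
  have hyiso : ∀ w : ((↑T : Set V)ᶜ : Set V),
      ¬ (G.induce ((↑T : Set V)ᶜ)).Adj ⟨y, by simpa using hyT⟩ w := by
    intro w h
    exact (not_mem_of_compl w) (hNy _ (by simpa using h))
  -- every vertex is one of x, y, w1, w2
  have hall : ∀ z : V, z = x ∨ z = y ∨ z = ↑w1 ∨ z = ↑w2 := by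
    intro z
    by_contra hcon
    push_neg at hcon
    obtain ⟨hzx, hzy, hzw1, hzw2⟩ := hcon
    have hzT : z ∉ T := by
      rw [hTeq]
      simp only [Finset.mem_insert, Finset.mem_singleton]
      push_neg
      exact ⟨hzw1, hzw2⟩
    have hzS : z ∉ S := by
      rw [hSeq]
      simp only [Finset.mem_insert, Finset.mem_singleton]
      push_neg
      exact ⟨hzx, hzy⟩
    set cz := (G.induce ((↑T : Set V)ᶜ)).connectedComponentMk ⟨z, by simpa using hzT⟩ with hcz
    have hczx : cz ≠ (G.induce ((↑T : Set V)ᶜ)).connectedComponentMk ⟨x, by simpa using hxT⟩ := by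
      intro h
      obtain ⟨p⟩ := (SimpleGraph.ConnectedComponent.exact h).symm
      cases p with
      | nil => exact hzx (by simpa using congrArg Subtype.val (rfl : (⟨x, _⟩ : _) = ⟨x, _⟩)) 
      | cons h' _ => exact hxiso _ h'
    have hczy : cz ≠ (G.induce ((↑T : Set V)ᶜ)).connectedComponentMk ⟨y, by simpa using hyT⟩ := by
      intro h
      obtain ⟨p⟩ := (SimpleGraph.ConnectedComponent.exact h).symm
      cases p with
      | nil => exact hzy rfl
      | cons h' _ => exact hyiso _ h'
    obtain ⟨d, hdc, hdadj⟩ := comp_meets_nbr hG hT hw1T cz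
    have hdT : (d : V) ∉ T := not_mem_of_compl d
    have hdx : (d : V) ≠ x := by
      intro h
      exact hczx (by rw [← hdc]; congr 1; exact Subtype.ext h)
    have hdy : (d : V) ≠ y := by
      intro h
      exact hczy (by rw [← hdc]; congr 1; exact Subtype.ext h)
    have hdS : (d : V) ∉ S := by
      rw [hSeq]
      simp only [Finset.mem_insert, Finset.mem_singleton]
      push_neg
      exact ⟨hdx, hdy⟩
    have hdadj2 : G.Adj ↑w2 ↑d := (hT.2.2 ↑w1 hw1T ↑w2 hw2T ↑d hdT).mp hdadj
    have e1 : (G.induce ((↑S : Set V)ᶜ)).Adj w1 ⟨↑d, by simpa using hdS⟩ := by simpa using hdadj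
    have e2 : (G.induce ((↑S : Set V)ᶜ)).Adj w2 ⟨↑d, by simpa using hdS⟩ := by simpa using hdadj2
    exact hc12 (by
      rw [← hw1c, ← hw2c]
      exact (SimpleGraph.ConnectedComponent.sound e1.reachable).trans
        (SimpleGraph.ConnectedComponent.sound e2.reachable).symm)
  have hxw1 : x ≠ ↑w1 := fun h => hxT (h ▸ hw1T)
  have hxw2 : x ≠ ↑w2 := fun h => hxT (h ▸ hw2T)
  have hyw1 : y ≠ ↑w1 := fun h => hyT (h ▸ hw1T)
  have hyw2 : y ≠ ↑w2 := fun h => hyT (h ▸ hw2T)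
  have ayu : G.Adj y ↑w1 := (hS.2.2 x hx y hy ↑w1 hw1S).mp hw1adj
  have ayv : G.Adj y ↑w2 := (hS.2.2 x hx y hy ↑w2 hw2S).mp hw2adj
  obtain ⟨iso⟩ := c4_iso hall hxy hw12 hxw1 hxw2 hyw1 hyw2 hw1adj hw2adj ayu ayv hadjxy nuv
  exact h4.false iso

end SameComp
section Move
set_option linter.unusedSectionVars false
set_option linter.unnecessarySimpa false
variable [Fintype V] [DecidableEq V] {G : SimpleGraph V}

lemma compDist_move_aux (hG : G.Connected) (h4 : IsEmpty (G ≃g SimpleGraph.cycleGraph 4))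
    {S T : Finset V} (hS : SameNbrCut G S) (hT : SameNbrCut G T) (hne : S ≠ T)
    {x y : V} (hxy : x ≠ y) (hSeq : S = {x, y}) {A : Finset V}
    (hxA : x ∈ A) (hyA : y ∉ A) :
    compDist G T (A ∆ S) = compDist G T A := by
  classical
  have hdisj := cuts_disjoint hG hS hT hne
  have hxS : x ∈ S := by simp [hSeq]
  have hyS : y ∈ S := by simp [hSeq]
  have hxT : x ∉ T := fun h => (Finset.disjoint_left.mp hdisj hxS) h
  have hyT : y ∉ T := fun h => (Finset.disjoint_left.mp hdisj hyS) h
  have hc0 := same_comp_of_other_cut hG h4 hS hT hne hxS hyS hxy hxT hyT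
  have hxmem : x ∈ ((↑T : Set V)ᶜ : Set V) := by simpa using hxT
  have hymem : y ∈ ((↑T : Set V)ᶜ : Set V) := by simpa using hyT
  -- membership in A ∆ S
  have hmem : ∀ z : V, z ∉ S → (z ∈ A ∆ S ↔ z ∈ A) := by
    intro z hz
    simp [Finset.mem_symmDiff, hz]
  have hxmemAS : x ∉ A ∆ S := by simp [Finset.mem_symmDiff, hxA, hxS]
  have hymemAS : y ∈ A ∆ S := by simp [Finset.mem_symmDiff, hyA, hyS]
  funext c
  by_cases hc : c = (G.induce ((↑T : Set V)ᶜ)).connectedComponentMk ⟨x, hxmem⟩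
  · -- exchange x for y
    unfold compDist
    have hset : {v : ((↑T : Set V)ᶜ : Set V) | (v : V) ∈ A ∆ S ∧
        (G.induce ((↑T : Set V)ᶜ)).connectedComponentMk v = c} =
        insert ⟨y, hymem⟩ ({v : ((↑T : Set V)ᶜ : Set V) | (v : V) ∈ A ∧
          (G.induce ((↑T : Set V)ᶜ)).connectedComponentMk v = c} \ {⟨x, hxmem⟩}) := by
      ext v
      simp only [Set.mem_setOf_eq, Set.mem_insert_iff, Set.mem_diff, Set.mem_singleton_iff]
      by_cases hvx : (v : V) = x
      · have hv : v = (⟨x, hxmem⟩ : ((↑T : Set V)ᶜ : Set V)) := Subtype.ext hvx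
        subst hv
        simp [hxmemAS, hxy, Subtype.ext_iff]
      · by_cases hvy : (v : V) = y
        · have hv : v = (⟨y, hymem⟩ : ((↑T : Set V)ᶜ : Set V)) := Subtype.ext hvy
          subst hv
          simp only [hymemAS, true_and, Subtype.ext_iff]
          constructor
          · intro _; exact Or.inl trivial
          · intro _
            rw [hc, ← hc0]
        · have hvS : (v : V) ∉ S := by
            rw [hSeq]; simp only [Finset.mem_insert, Finset.mem_singleton]; push_neg
            exact ⟨hvx, hvy⟩
          rw [hmem _ hvS]
          constructor
          · intro hv; right; exact ⟨hv, fun h => hvx (by rw [h])⟩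
          · rintro (h | h)
            · exact absurd (congrArg Subtype.val h) hvy
            · exact h.1
    rw [hset]
    apply Set.ncard_exchange
    · simp [hyA]
    · simp only [Set.mem_setOf_eq]
      exact ⟨hxA, hc.symm⟩
  · -- components other than that of x (and y): no change
    unfold compDist
    congr 1
    ext v
    simp only [Set.mem_setOf_eq]
    by_cases hvx : (v : V) = x
    · have hv : v = (⟨x, hxmem⟩ : ((↑T : Set V)ᶜ : Set V)) := Subtype.ext hvx
      subst hv
      simp only [hxmemAS, false_and]
      exact iff_of_false (fun h => h.elim) (fun h => hc h.2.symm)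
    · by_cases hvy : (v : V) = y
      · have hv : v = (⟨y, hymem⟩ : ((↑T : Set V)ᶜ : Set V)) := Subtype.ext hvy
        subst hv
        have hcy : (G.induce ((↑T : Set V)ᶜ)).connectedComponentMk ⟨y, hymem⟩ ≠ c := by
          rw [← hc0]; exact fun h => hc h.symm
        simp [hymemAS, hyA, hcy]
      · have hvS : (v : V) ∉ S := by
          rw [hSeq]; simp only [Finset.mem_insert, Finset.mem_singleton]; push_neg
          exact ⟨hvx, hvy⟩
        rw [hmem _ hvS]

lemma inter_card_one {U A : Finset V} {k : ℕ} (hk1 : 1 ≤ k)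
    (hU : SameNbrCut G U) (hA : A.card = k)
    (ht : compDist G U A ∈ TS G U k) : (A ∩ U).card = 1 := by
  have hsum : (A \ U).card = k - 1 := by rw [← sum_compDist G U A]; exact ht.2
  have := Finset.card_sdiff_add_card_inter A U
  omega

lemma card_move {U A : Finset V} {k : ℕ} (hk1 : 1 ≤ k)
    (hU : SameNbrCut G U) (hA : A.card = k)
    (ht : compDist G U A ∈ TS G U k) : (A ∆ U).card = k := by
  have h1 : (A ∩ U).card = 1 := inter_card_one hk1 hU hA ht
  have hsum : (A \ U).card = k - 1 := by rw [← sum_compDist G U A]; exact ht.2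
  have h2 := Finset.card_sdiff_add_card_inter U A
  have h3 : (U ∩ A).card = 1 := by rw [Finset.inter_comm]; exact h1
  have hU2 : U.card = 2 := hU.1
  have hdisj : Disjoint (A \ U) (U \ A) := by
    rw [Finset.disjoint_left]
    intro a ha hb
    exact (Finset.mem_sdiff.mp hb).2 (Finset.mem_sdiff.mp ha).1
  have : (A ∆ U).card = (A \ U).card + (U \ A).card := by
    rw [show A ∆ U = (A \ U) ∪ (U \ A) from rfl]
    exact Finset.card_union_of_disjoint hdisj
  omega

/-- The key invariance: moving along cut `S` does not change distribution over `G - T`. -/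
lemma compDist_symmDiff_other (hG : G.Connected) (h4 : IsEmpty (G ≃g SimpleGraph.cycleGraph 4))
    {S T : Finset V} (hS : SameNbrCut G S) (hT : SameNbrCut G T) (hne : S ≠ T)
    {A : Finset V} (h1 : (A ∩ S).card = 1) :
    compDist G T (A ∆ S) = compDist G T A := by
  obtain ⟨x, y, hxy, hSeq⟩ := Finset.card_eq_two.mp hS.1
  obtain ⟨z, hz⟩ := Finset.card_eq_one.mp h1
  have hzA : z ∈ A ∧ z ∈ S := by
    have : z ∈ A ∩ S := by rw [hz]; simp
    exact ⟨(Finset.mem_inter.mp this).1, (Finset.mem_inter.mp this).2⟩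
  have hzxy : z = x ∨ z = y := by
    have := hzA.2; rw [hSeq] at this; simpa using this
  rcases hzxy with rfl | rfl
  · have hyA : y ∉ A := by
      intro hyA
      have : y ∈ A ∩ S := Finset.mem_inter.mpr ⟨hyA, by simp [hSeq]⟩
      rw [hz] at this
      exact hxy.symm (by simpa using this)
    exact compDist_move_aux hG h4 hS hT hne hxy hSeq hzA.1 hyA
  · have hxA : x ∉ A := by
      intro hxA
      have : x ∈ A ∩ S := Finset.mem_inter.mpr ⟨hxA, by simp [hSeq]⟩
      rw [hz] at this
      exact hxy (by simpa using this)
    exact compDist_move_aux hG h4 hS hT hne hxy.symm (by rw [hSeq, Finset.pair_comm]) hzA.1 hxA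

end Move
section Psi
set_option linter.unusedSectionVars false
set_option linter.unnecessarySimpa false

noncomputable def appList [DecidableEq V] (G : SimpleGraph V) {q : ℕ} (S : Fin q → Finset V)
    (β : ∀ i, Set (delComp G (S i) → ℕ)) (l : List (Fin q)) (A : Finset V) : Finset V :=
  l.foldr (fun i B => phiFun G (S i) (β i) B) A

variable [Fintype V] [DecidableEq V] {G : SimpleGraph V} {q : ℕ} {S : Fin q → Finset V} {k : ℕ}
  {β β' : ∀ i, Set (delComp G (S i) → ℕ)}

@[simp] lemma appList_nil {A : Finset V} : appList G S β [] A = A := rfl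

@[simp] lemma appList_cons {i : Fin q} {l : List (Fin q)} {A : Finset V} :
    appList G S β (i :: l) A = phiFun G (S i) (β i) (appList G S β l A) := rfl

lemma psiFun_eq_appList (β : ∀ i, Set (delComp G (S i) → ℕ)) (A : Finset V) :
    psiFun G S β A = appList G S β (List.finRange q) A := by
  unfold psiFun appList
  rw [List.ofFn_eq_map, List.foldr_map]
  induction (List.finRange q) with
  | nil => rfl
  | cons i l ih =>
    simp only [List.foldr_cons]
    rw [Function.comp_apply, ih]

lemma appList_card (hk1 : 1 ≤ k) (hcut : ∀ i, SameNbrCut G (S i))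
    (hβ : ∀ i, β i ⊆ TS G (S i) k) :
    ∀ (l : List (Fin q)) {A : Finset V}, A.card = k → (appList G S β l A).card = k := by
  intro l
  induction l with
  | nil => intro A hA; exact hA
  | cons i l ih =>
    intro A hA
    have hB := ih hA
    rw [appList_cons, phiFun]
    split_ifs with h
    · rw [tokenMove_eq]
      exact card_move hk1 (hcut i) hB (hβ i h)
    · exact hB

lemma appList_compDist (hG : G.Connected) (h4 : IsEmpty (G ≃g SimpleGraph.cycleGraph 4))
    (hk1 : 1 ≤ k) (hinj : Function.Injective S) (hcut : ∀ i, SameNbrCut G (S i))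
    (hβ : ∀ i, β i ⊆ TS G (S i) k) :
    ∀ (l : List (Fin q)) {A : Finset V}, A.card = k → ∀ j,
      compDist G (S j) (appList G S β l A) = compDist G (S j) A := by
  intro l
  induction l with
  | nil => intro A _ j; rfl
  | cons i l ih =>
    intro A hA j
    have hB := appList_card hk1 hcut hβ l hA
    rw [appList_cons, phiFun]
    split_ifs with h
    · rw [tokenMove_eq]
      by_cases hij : i = j
      · subst hij
        rw [compDist_symmDiff]
        exact ih hA i
      · rw [compDist_symmDiff_other hG h4 (hcut i) (hcut j) (fun e => hij (hinj e))
          (inter_card_one hk1 (hcut i) hB (hβ i h))]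
        exact ih hA j
    · exact ih hA j

lemma phiFun_phiFun (U : Finset V) (α α' : Set (delComp G U → ℕ)) (A : Finset V) :
    phiFun G U α (phiFun G U α' A) = phiFun G U (α ∆ α') A := by
  unfold phiFun
  rw [show @tokenMove V _ = fun A S => A ∆ S from rfl]
  beta_reduce
  by_cases h' : compDist G U A ∈ α'
  · rw [if_pos h', compDist_symmDiff]
    by_cases h : compDist G U A ∈ α
    · rw [if_pos h, if_neg (by simp [Set.mem_symmDiff, h, h']), symmDiff_symmDiff_cancel_right]
    · rw [if_neg h, if_pos (Set.mem_symmDiff.mpr (Or.inr ⟨h', h⟩))]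
  · rw [if_neg h']
    by_cases h : compDist G U A ∈ α
    · rw [if_pos h, if_pos (Set.mem_symmDiff.mpr (Or.inl ⟨h, h'⟩))]
    · rw [if_neg h, if_neg (by simp [Set.mem_symmDiff, h, h'])]

lemma phiFun_comm_same (U : Finset V) (α α' : Set (delComp G U → ℕ)) (A : Finset V) :
    phiFun G U α (phiFun G U α' A) = phiFun G U α' (phiFun G U α A) := by
  rw [phiFun_phiFun, phiFun_phiFun, symmDiff_comm]

lemma phiFun_comm (hG : G.Connected) (h4 : IsEmpty (G ≃g SimpleGraph.cycleGraph 4))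
    (hk1 : 1 ≤ k) (hinj : Function.Injective S) (hcut : ∀ i, SameNbrCut G (S i))
    {i j : Fin q} {αi : Set (delComp G (S i) → ℕ)} {αj : Set (delComp G (S j) → ℕ)}
    (hαi : αi ⊆ TS G (S i) k) (hαj : αj ⊆ TS G (S j) k)
    {A : Finset V} (hA : A.card = k) :
    phiFun G (S i) αi (phiFun G (S j) αj A) = phiFun G (S j) αj (phiFun G (S i) αi A) := by
  by_cases hij : i = j
  · subst hij; exact phiFun_comm_same _ _ _ _
  have hne : S i ≠ S j := fun e => hij (hinj e)
  have hne' : S j ≠ S i := fun e => hij (hinj e.symm)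
  by_cases hj : compDist G (S j) A ∈ αj
  · have e1 : phiFun G (S j) αj A = A ∆ S j := by rw [phiFun, if_pos hj, tokenMove_eq]
    have ci : compDist G (S i) (A ∆ S j) = compDist G (S i) A :=
      compDist_symmDiff_other hG h4 (hcut j) (hcut i) hne'
        (inter_card_one hk1 (hcut j) hA (hαj hj))
    by_cases hi : compDist G (S i) A ∈ αi
    · have e2 : phiFun G (S i) αi A = A ∆ S i := by rw [phiFun, if_pos hi, tokenMove_eq]
      have cj : compDist G (S j) (A ∆ S i) = compDist G (S j) A :=
        compDist_symmDiff_other hG h4 (hcut i) (hcut j) hne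
          (inter_card_one hk1 (hcut i) hA (hαi hi))
      rw [e1, e2, phiFun, tokenMove_eq, ci, if_pos hi, phiFun, tokenMove_eq, cj, if_pos hj,
        symmDiff_assoc, symmDiff_assoc, symmDiff_comm (S j) (S i)]
    · have e2 : phiFun G (S i) αi A = A := by rw [phiFun, if_neg hi]
      rw [e1, e2, phiFun, ci, if_neg hi, e1]
  · have e1 : phiFun G (S j) αj A = A := by rw [phiFun, if_neg hj]
    by_cases hi : compDist G (S i) A ∈ αi
    · have e2 : phiFun G (S i) αi A = A ∆ S i := by rw [phiFun, if_pos hi, tokenMove_eq]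
      have cj : compDist G (S j) (A ∆ S i) = compDist G (S j) A :=
        compDist_symmDiff_other hG h4 (hcut i) (hcut j) hne
          (inter_card_one hk1 (hcut i) hA (hαi hi))
      rw [e1, e2, phiFun, cj, if_neg hj]
    · have e2 : phiFun G (S i) αi A = A := by rw [phiFun, if_neg hi]
      rw [e1, e2, e1]

lemma phiFun_appList_comm (hG : G.Connected) (h4 : IsEmpty (G ≃g SimpleGraph.cycleGraph 4))
    (hk1 : 1 ≤ k) (hinj : Function.Injective S) (hcut : ∀ i, SameNbrCut G (S i))
    (hβ : ∀ i, β i ⊆ TS G (S i) k) {i : Fin q} {α : Set (delComp G (S i) → ℕ)}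
    (hα : α ⊆ TS G (S i) k) :
    ∀ (l : List (Fin q)) {A : Finset V}, A.card = k →
      phiFun G (S i) α (appList G S β l A) = appList G S β l (phiFun G (S i) α A) := by
  intro l
  induction l with
  | nil => intro A _; rfl
  | cons j l ih =>
    intro A hA
    have hB := appList_card hk1 hcut hβ l hA
    rw [appList_cons, appList_cons,
      phiFun_comm hG h4 hk1 hinj hcut hα (hβ j) hB, ih hA]

lemma appList_symmDiff (hG : G.Connected) (h4 : IsEmpty (G ≃g SimpleGraph.cycleGraph 4))
    (hk1 : 1 ≤ k) (hinj : Function.Injective S) (hcut : ∀ i, SameNbrCut G (S i))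
    (hβ : ∀ i, β i ⊆ TS G (S i) k) (hβ' : ∀ i, β' i ⊆ TS G (S i) k) :
    ∀ (l : List (Fin q)) {A : Finset V}, A.card = k →
      appList G S (fun i => β i ∆ β' i) l A = appList G S β l (appList G S β' l A) := by
  have hβd : ∀ i, (β i ∆ β' i) ⊆ TS G (S i) k := by
    intro i t ht
    rcases Set.mem_symmDiff.mp ht with h | h
    · exact hβ i h.1
    · exact hβ' i h.1
  intro l
  induction l with
  | nil => intro A _; rfl
  | cons i l ih =>
    intro A hA
    rw [appList_cons, appList_cons, appList_cons, ih hA, ← phiFun_phiFun,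
      phiFun_appList_comm hG h4 hk1 hinj hcut hβ (hβ' i) l
        (appList_card hk1 hcut hβ' l hA)]

lemma appList_mem_untouched {y : V} :
    ∀ (l : List (Fin q)), (∀ j ∈ l, y ∉ S j) → ∀ {A : Finset V},
      (y ∈ appList G S β l A ↔ y ∈ A) := by
  intro l
  induction l with
  | nil => intro _ A; rfl
  | cons j l ih =>
    intro hl A
    have hyj : y ∉ S j := hl j (by simp)
    rw [appList_cons, phiFun]
    split_ifs with h
    · rw [tokenMove_eq, Finset.mem_symmDiff]
      have := ih (fun j' hj' => hl j' (by simp [hj'])) (A := A)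
      simp [hyj, this]
    · exact ih (fun j' hj' => hl j' (by simp [hj']))

lemma appList_mem_toggled (hG : G.Connected) (h4 : IsEmpty (G ≃g SimpleGraph.cycleGraph 4))
    (hk1 : 1 ≤ k) (hinj : Function.Injective S) (hcut : ∀ i, SameNbrCut G (S i))
    (hβ : ∀ i, β i ⊆ TS G (S i) k) {i : Fin q} {y : V} (hy : y ∈ S i)
    (hd : ∀ j, j ≠ i → y ∉ S j) :
    ∀ (l : List (Fin q)), l.Nodup → i ∈ l → ∀ {A : Finset V}, A.card = k →
      compDist G (S i) A ∈ β i → (y ∈ appList G S β l A ↔ y ∉ A) := by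
  intro l
  induction l with
  | nil => intro _ h; exact absurd h (by simp)
  | cons j l ih =>
    intro hnd hmem A hA htrig
    have hjl : j ∉ l := (List.nodup_cons.mp hnd).1
    have hnd' : l.Nodup := (List.nodup_cons.mp hnd).2
    by_cases hij : i = j
    · subst hij
      have hil : i ∉ l := hjl
      have huntouched : y ∈ appList G S β l A ↔ y ∈ A :=
        appList_mem_untouched l (fun j' hj' => hd j' (fun e => hil (e ▸ hj')))
      have htrig' : compDist G (S i) (appList G S β l A) ∈ β i := by
        rw [appList_compDist hG h4 hk1 hinj hcut hβ l hA i]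
        exact htrig
      rw [appList_cons, phiFun, if_pos htrig', tokenMove_eq, Finset.mem_symmDiff]
      simp [hy, huntouched]
    · have himem : i ∈ l := by
        rcases List.mem_cons.mp hmem with h | h
        · exact absurd h hij
        · exact h
      have hyj : y ∉ S j := hd j (fun e => hij e.symm)
      have := ih hnd' himem hA htrig
      rw [appList_cons, phiFun]
      split_ifs with h
      · rw [tokenMove_eq, Finset.mem_symmDiff]
        simp [hyj, this]
      · exact this

end Psi
section Exists
set_option linter.unusedSectionVars false
set_option linter.unnecessarySimpa false
variable [Fintype V] [DecidableEq V] {G : SimpleGraph V} {k : ℕ}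

lemma exists_config (hk1 : 1 ≤ k) {U : Finset V} (hU : SameNbrCut G U)
    {t : delComp G U → ℕ} (ht : t ∈ TS G U k) {x y : V} (hx : x ∈ U) (hy : y ∈ U)
    (hxy : x ≠ y) :
    ∃ A : Finset V, A.card = k ∧ compDist G U A = t ∧ x ∈ A ∧ y ∉ A := by
  classical
  choose B hBsub hBcard using fun c : delComp G U => Set.exists_subset_card_eq (ht.1 c)
  set Bf : delComp G U → Finset V :=
    fun c => (Set.toFinite (Subtype.val '' B c)).toFinset with hBf
  have hBfcard : ∀ c, (Bf c).card = t c := by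
    intro c
    rw [hBf]
    rw [← Set.ncard_eq_toFinset_card (Subtype.val '' B c) (Set.toFinite _)]
    rw [Set.ncard_image_of_injective _ Subtype.val_injective]
    exact hBcard c
  have hBfnotU : ∀ c z, z ∈ Bf c → z ∉ U := by
    intro c z hz
    rw [hBf, Set.Finite.mem_toFinset] at hz
    obtain ⟨v, _, rfl⟩ := hz
    exact not_mem_of_compl v
  have hBfmk : ∀ c (v : ((↑U : Set V)ᶜ : Set V)), (v : V) ∈ Bf c →
      (G.induce ((↑U : Set V)ᶜ)).connectedComponentMk v = c := by
    intro c v hv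
    rw [hBf, Set.Finite.mem_toFinset] at hv
    obtain ⟨w, hw, hwv⟩ := hv
    have : w = v := Subtype.ext hwv
    subst this
    exact (SimpleGraph.ConnectedComponent.mem_supp_iff _ _).mp (hBsub c hw)
  have hBfdisj : ∀ c, ∀ c', c ≠ c' → Disjoint (Bf c) (Bf c') := by
    intro c c' hcc'
    rw [Finset.disjoint_left]
    intro z hz hz'
    have hzU : z ∉ U := hBfnotU c z hz
    set v : ((↑U : Set V)ᶜ : Set V) := ⟨z, by simpa using hzU⟩ with hv
    exact hcc' ((hBfmk c v hz).symm.trans (hBfmk c' v hz'))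
  set W : Finset V := Finset.univ.biUnion Bf with hW
  have hxW : x ∉ W := by
    rw [hW]
    simp only [Finset.mem_biUnion]
    rintro ⟨c, _, hc⟩
    exact hBfnotU c x hc hx
  have hyW : y ∉ W := by
    rw [hW]
    simp only [Finset.mem_biUnion]
    rintro ⟨c, _, hc⟩
    exact hBfnotU c y hc hy
  refine ⟨insert x W, ?_, ?_, Finset.mem_insert_self x W, ?_⟩
  · rw [Finset.card_insert_of_notMem hxW, hW,
      Finset.card_biUnion (fun c _ c' _ h => hBfdisj c c' h)]
    have hsum : ∑ c, (Bf c).card = k - 1 := by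
      rw [Finset.sum_congr rfl (fun c _ => hBfcard c)]
      rw [← finsum_eq_sum_of_fintype t]
      exact ht.2
    omega
  · funext c
    have hseteq : {v : ((↑U : Set V)ᶜ : Set V) | (v : V) ∈ insert x W ∧
        (G.induce ((↑U : Set V)ᶜ)).connectedComponentMk v = c} = B c := by
      ext v
      simp only [Set.mem_setOf_eq, Finset.mem_insert]
      constructor
      · rintro ⟨hvA, hmk⟩
        rcases hvA with hvx | hvW
        · exact absurd (hvx ▸ hx) (not_mem_of_compl v)
        · rw [hW, Finset.mem_biUnion] at hvW
          obtain ⟨c', _, hc'⟩ := hvW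
          have := hBfmk c' v hc'
          rw [hmk] at this
          subst this
          rw [hBf, Set.Finite.mem_toFinset] at hc'
          obtain ⟨w, hw, hwv⟩ := hc'
          have : w = v := Subtype.ext hwv
          exact this ▸ hw
      · intro hvB
        refine ⟨Or.inr ?_, (SimpleGraph.ConnectedComponent.mem_supp_iff _ _).mp (hBsub c hvB)⟩
        rw [hW, Finset.mem_biUnion]
        exact ⟨c, Finset.mem_univ c, by
          rw [hBf, Set.Finite.mem_toFinset]
          exact ⟨v, hvB, rfl⟩⟩
    rw [compDist, hseteq, hBcard]
  · simp only [Finset.mem_insert]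
    push_neg
    exact ⟨hxy.symm, hyW⟩

end Exists
section Main
set_option linter.unusedSectionVars false
set_option linter.unnecessarySimpa false
variable [Fintype V] [DecidableEq V] {G : SimpleGraph V} {q : ℕ} {S : Fin q → Finset V} {k : ℕ}

lemma appList_empty : ∀ (l : List (Fin q)) (A : Finset V),
    appList G S (fun _ => (∅ : Set _)) l A = A := by
  intro l
  induction l with
  | nil => intro A; rfl
  | cons i l ih =>
    intro A
    rw [appList_cons, ih, phiFun, if_neg (Set.notMem_empty _)]

theorem N_iso_Z2_pow' (G : SimpleGraph V)
    (hG : G.Connected) (h4 : IsEmpty (G ≃g SimpleGraph.cycleGraph 4))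
    (k : ℕ) (hk1 : 1 ≤ k) (hk2 : k ≤ Fintype.card V - 1)
    (q : ℕ) (S : Fin q → Finset V) (hinj : Function.Injective S)
    (hcut : ∀ i, SameNbrCut G (S i))
    (hall : ∀ T : Finset V, SameNbrCut G T → ∃ i, T = S i) :
    Nonempty
      ((Subgroup.closure {e : Equiv.Perm {A : Finset V // A.card = k} |
          ∃ β : ∀ i, Set (delComp G (S i) → ℕ), (∀ i, β i ⊆ TS G (S i) k) ∧
            ∀ A : {A : Finset V // A.card = k},
              ((e A : {B : Finset V // B.card = k}) : Finset V) = psiFun G S β (↑A : Finset V)})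
        ≃* (((i : Fin q) × (TS G (S i) k)) → Multiplicative (ZMod 2))) := by
  classical
  set Dom := ((i : Fin q) × (TS G (S i) k)) → Multiplicative (ZMod 2) with hDom
  set βf : Dom → ∀ i, Set (delComp G (S i) → ℕ) :=
    fun f i => {t | ∃ h : t ∈ TS G (S i) k, f ⟨i, ⟨t, h⟩⟩ ≠ 1} with hβfdef
  have hβf : ∀ f i, βf f i ⊆ TS G (S i) k := by
    rintro f i t ⟨h, _⟩; exact h
  have hmem_βf : ∀ (f : Dom) i t (h : t ∈ TS G (S i) k),
      t ∈ βf f i ↔ f ⟨i, ⟨t, h⟩⟩ ≠ 1 := by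
    intro f i t h
    constructor
    · rintro ⟨h', hne⟩
      have e : (⟨t, h'⟩ : TS G (S i) k) = ⟨t, h⟩ := Subtype.ext rfl
      rw [e] at hne; exact hne
    · intro hne; exact ⟨h, hne⟩
  have hcard : ∀ (f : Dom) (A : Finset V), A.card = k → (psiFun G S (βf f) A).card = k := by
    intro f A hA
    rw [psiFun_eq_appList]
    exact appList_card hk1 hcut (hβf f) _ hA
  have hinvol : ∀ (β : ∀ i, Set (delComp G (S i) → ℕ)) (hβ : ∀ i, β i ⊆ TS G (S i) k)
      (A : Finset V), A.card = k → psiFun G S β (psiFun G S β A) = A := by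
    intro β hβ A hA
    rw [psiFun_eq_appList, psiFun_eq_appList]
    have h1 := appList_symmDiff hG h4 hk1 hinj hcut hβ hβ (List.finRange q) hA
    have h2 : (fun i => β i ∆ β i) = fun i : Fin q => (∅ : Set (delComp G (S i) → ℕ)) := by
      funext i
      rw [symmDiff_self]
      rfl
    rw [h2, appList_empty] at h1
    exact h1.symm
  set toPerm : Dom → Equiv.Perm {A : Finset V // A.card = k} := fun f =>
    { toFun := fun A => ⟨psiFun G S (βf f) ↑A, hcard f ↑A A.2⟩
      invFun := fun A => ⟨psiFun G S (βf f) ↑A, hcard f ↑A A.2⟩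
      left_inv := fun A => Subtype.ext (hinvol (βf f) (hβf f) ↑A A.2)
      right_inv := fun A => Subtype.ext (hinvol (βf f) (hβf f) ↑A A.2) } with htoPerm
  have zfact : ∀ u v : Multiplicative (ZMod 2),
      (u * v ≠ 1 ↔ ((u ≠ 1 ∧ ¬ v ≠ 1) ∨ (v ≠ 1 ∧ ¬ u ≠ 1))) := by decide
  have hb : ∀ f g : Dom, βf (f * g) = fun i => βf f i ∆ βf g i := by
    intro f g
    funext i
    ext t
    by_cases h : t ∈ TS G (S i) k
    · rw [hmem_βf (f * g) i t h, Set.mem_symmDiff, hmem_βf f i t h, hmem_βf g i t h]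
      have : (f * g) ⟨i, ⟨t, h⟩⟩ = f ⟨i, ⟨t, h⟩⟩ * g ⟨i, ⟨t, h⟩⟩ := rfl
      rw [this]
      exact zfact _ _
    · have h1 : t ∉ βf (f * g) i := by rintro ⟨h', _⟩; exact h h'
      have h2 : t ∉ βf f i := by rintro ⟨h', _⟩; exact h h'
      have h3 : t ∉ βf g i := by rintro ⟨h', _⟩; exact h h'
      simp [h1, h2, h3, Set.mem_symmDiff]
  have hmul : ∀ f g : Dom, toPerm (f * g) = toPerm f * toPerm g := by
    intro f g
    apply Equiv.ext
    intro A
    apply Subtype.ext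
    show psiFun G S (βf (f * g)) ↑A = psiFun G S (βf f) (psiFun G S (βf g) ↑A)
    rw [hb f g, psiFun_eq_appList, psiFun_eq_appList, psiFun_eq_appList]
    exact appList_symmDiff hG h4 hk1 hinj hcut (hβf f) (hβf g) (List.finRange q) A.2
  set Φ : Dom →* Equiv.Perm {A : Finset V // A.card = k} := MonoidHom.mk' toPerm hmul with hΦ
  have hker : ∀ f : Dom, Φ f = 1 → f = 1 := by
    intro f hf
    by_contra hne
    have hex : ∃ p, f p ≠ 1 := by
      by_contra h; push_neg at h; exact hne (funext h)
    obtain ⟨⟨i, ⟨t, ht⟩⟩, hp⟩ := hex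
    obtain ⟨x, y, hxy, hUeq⟩ := Finset.card_eq_two.mp (hcut i).1
    have hxSi : x ∈ S i := by simp [hUeq]
    have hySi : y ∈ S i := by simp [hUeq]
    obtain ⟨A, hA, hcd, hxA, hyA⟩ := exists_config hk1 (hcut i) ht hxSi hySi hxy
    have htrig : compDist G (S i) A ∈ βf f i := by
      rw [hcd]; exact (hmem_βf f i t ht).mpr hp
    have hd : ∀ j, j ≠ i → y ∉ S j := fun j hj hyj =>
      (Finset.disjoint_left.mp (cuts_disjoint hG (hcut j) (hcut i)
        (fun e => hj (hinj e)))) hyj hySi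
    have hy' : y ∈ psiFun G S (βf f) A := by
      rw [psiFun_eq_appList]
      exact (appList_mem_toggled hG h4 hk1 hinj hcut (hβf f) hySi hd (List.finRange q)
        (List.nodup_finRange q) (List.mem_finRange i) hA htrig).mpr hyA
    have heq : Φ f ⟨A, hA⟩ = ⟨A, hA⟩ := by rw [hf]; rfl
    have heq2 : psiFun G S (βf f) A = A := congrArg Subtype.val heq
    rw [heq2] at hy'
    exact hyA hy'
  have hinjΦ : Function.Injective Φ := (injective_iff_map_eq_one Φ).mpr hker
  have hset : {e : Equiv.Perm {A : Finset V // A.card = k} |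
      ∃ β : ∀ i, Set (delComp G (S i) → ℕ), (∀ i, β i ⊆ TS G (S i) k) ∧
        ∀ A : {A : Finset V // A.card = k},
          ((e A : {B : Finset V // B.card = k}) : Finset V) = psiFun G S β (↑A : Finset V)} =
      (Φ.range : Set (Equiv.Perm {A : Finset V // A.card = k})) := by
    ext e
    constructor
    · rintro ⟨β, hβ, hspec⟩
      refine ⟨(fun p => if (p.2 : delComp G (S p.1) → ℕ) ∈ β p.1
        then Multiplicative.ofAdd (1 : ZMod 2) else 1 : Dom), ?_⟩
      have hββ : βf (fun p => if (p.2 : delComp G (S p.1) → ℕ) ∈ β p.1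
          then Multiplicative.ofAdd (1 : ZMod 2) else 1) = β := by
        funext i
        ext t
        constructor
        · rintro ⟨h, hne⟩
          by_cases hβmem : t ∈ β i
          · exact hβmem
          · exact absurd (if_neg hβmem) hne
        · intro hβmem
          exact ⟨hβ i hβmem, by simp only [hβmem, if_pos]; decide⟩
      apply Equiv.ext
      intro A
      apply Subtype.ext
      show psiFun G S (βf (fun p => if (p.2 : delComp G (S p.1) → ℕ) ∈ β p.1
        then Multiplicative.ofAdd (1 : ZMod 2) else 1)) ↑A
          = ((e A : {B : Finset V // B.card = k}) : Finset V)
      rw [hspec A, hββ]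
    · rintro ⟨f, rfl⟩
      exact ⟨βf f, hβf f, fun A => rfl⟩
  have hcl : Subgroup.closure {e : Equiv.Perm {A : Finset V // A.card = k} |
      ∃ β : ∀ i, Set (delComp G (S i) → ℕ), (∀ i, β i ⊆ TS G (S i) k) ∧
        ∀ A : {A : Finset V // A.card = k},
          ((e A : {B : Finset V // B.card = k}) : Finset V) = psiFun G S β (↑A : Finset V)} =
      Φ.range := by
    rw [hset, Subgroup.closure_eq]
  exact ⟨(MulEquiv.subgroupCongr hcl).trans (MonoidHom.ofInjective hinjΦ).symm⟩

end Main

/-- `𝒩 = ⟨{ψ_β : β ⊆ 𝒯_G}⟩ ≅ ℤ₂^{|𝒯_G|}`. -/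
theorem N_iso_Z2_pow [Fintype V] [DecidableEq V] (G : SimpleGraph V)
    (hG : G.Connected) (h4 : IsEmpty (G ≃g SimpleGraph.cycleGraph 4))
    (k : ℕ) (hk1 : 1 ≤ k) (hk2 : k ≤ Fintype.card V - 1)
    (q : ℕ) (S : Fin q → Finset V) (hinj : Function.Injective S)
    (hcut : ∀ i, SameNbrCut G (S i))
    (hall : ∀ T : Finset V, SameNbrCut G T → ∃ i, T = S i) :
    Nonempty
      ((Subgroup.closure {e : Equiv.Perm {A : Finset V // A.card = k} |
          ∃ β : ∀ i, Set (delComp G (S i) → ℕ), (∀ i, β i ⊆ TS G (S i) k) ∧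
            ∀ A : {A : Finset V // A.card = k},
              ((e A : {B : Finset V // B.card = k}) : Finset V) = psiFun G S β (↑A : Finset V)})
        ≃* (((i : Fin q) × (TS G (S i) k)) → Multiplicative (ZMod 2))) := by
  exact N_iso_Z2_pow' G hG h4 k hk1 hk2 q S hinj hcut hall
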